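/- For β > 0 and ρ ∈ [0,1) define G_β(ρ) := ∑_{n≥0} (1/2)_n (β/2)_n / ( ((β+1)/2)_n · n! ) · ρ^{2n}. Then for all β₁ ≥ β₂ > 0 and all ρ ∈ [0,1): G_{β₁}(ρ) / G_{β₂}(ρ) ≤ Γ((β₁+1)/2) Γ(β₂/2) / ( Γ((β₂+1)/2) Γ(β₁/2) ), where Γ is the Gamma function. -/

import Mathlib

open Polynomial Real

lemma poch_pos {x : ℝ} (hx : 0 < x) (n : ℕ) : 0 < (ascPochhammer ℝ n).eval x := by
  induction n with
  | zero => simp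
  | succ n ih =>
    rw [ascPochhammer_succ_eval]
    exact mul_pos ih (by positivity)

lemma poch_mono {x y : ℝ} (hx : 0 < x) (hxy : x ≤ y) (n : ℕ) :
    (ascPochhammer ℝ n).eval x ≤ (ascPochhammer ℝ n).eval y := by
  induction n with
  | zero => simp
  | succ n ih =>
    rw [ascPochhammer_succ_eval, ascPochhammer_succ_eval]
    exact mul_le_mul ih (by linarith) (by positivity) (poch_pos (hx.trans_le hxy) n).le

lemma poch_one (n : ℕ) : (ascPochhammer ℝ n).eval 1 = (n.factorial : ℝ) := by
  induction n with
  | zero => simp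
  | succ n ih =>
    rw [ascPochhammer_succ_eval, ih, Nat.factorial_succ]
    push_cast; ring

lemma gamma_poch {x : ℝ} (hx : 0 < x) (n : ℕ) :
    Real.Gamma x * (ascPochhammer ℝ n).eval x = Real.Gamma (x + n) := by
  induction n with
  | zero => simp
  | succ n ih =>
    have h : (x + (n + 1 : ℕ) : ℝ) = (x + n) + 1 := by push_cast; ring
    rw [ascPochhammer_succ_eval, h, Real.Gamma_add_one (by positivity), ← ih]
    ring

lemma gamma_ratio {x y : ℝ} (hx : 0 < x) (hxy : x ≤ y) :
    Real.Gamma y * Real.Gamma (x + 1/2) ≤ Real.Gamma x * Real.Gamma (y + 1/2) := by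
  rcases eq_or_lt_of_le hxy with rfl | hlt
  · rw [mul_comm]
  · have hy : 0 < y := hx.trans hlt
    have hd : (0:ℝ) < y - x := by linarith
    have hden : (0:ℝ) < y - x + 1/2 := by linarith
    set t : ℝ := (y - x) / (y - x + 1/2) with ht
    have ht0 : 0 ≤ t := by positivity
    have ht1 : t ≤ 1 := by rw [ht, div_le_one hden]; linarith
    have hmemx : x ∈ Set.Ioi (0:ℝ) := hx
    have hmemy : (y + 1/2) ∈ Set.Ioi (0:ℝ) := by simp [Set.mem_Ioi]; linarith
    have htm : t * (y - x + 1/2) = y - x := by rw [ht]; exact div_mul_cancel₀ _ hden.ne'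
    have h1 : (1 - t) • x + t • (y + 1/2) = y := by
      simp only [smul_eq_mul]; linear_combination htm
    have h2 : t • x + (1 - t) • (y + 1/2) = x + 1/2 := by
      simp only [smul_eq_mul]; linear_combination -htm
    have hc := convexOn_log_Gamma.2 hmemx hmemy
    have hA := hc (a := 1 - t) (b := t) (by linarith) ht0 (by ring)
    rw [h1] at hA
    have hB := hc (a := t) (b := 1 - t) ht0 (by linarith) (by ring)
    rw [h2] at hB
    have key : Real.log (Real.Gamma y) + Real.log (Real.Gamma (x + 1/2)) ≤
        Real.log (Real.Gamma x) + Real.log (Real.Gamma (y + 1/2)) := by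
      simp only [Function.comp, smul_eq_mul] at hA hB
      linarith
    have g1 := Real.Gamma_pos_of_pos hy
    have g2 := Real.Gamma_pos_of_pos (show (0:ℝ) < x + 1/2 by linarith)
    have g3 := Real.Gamma_pos_of_pos hx
    have g4 := Real.Gamma_pos_of_pos (show (0:ℝ) < y + 1/2 by linarith)
    rw [← Real.log_mul g1.ne' g2.ne', ← Real.log_mul g3.ne' g4.ne'] at key
    exact (Real.log_le_log_iff (by positivity) (by positivity)).mp key

lemma Gsummable (β ρ : ℝ) (hβ : 0 < β) (hρ0 : 0 ≤ ρ) (hρ1 : ρ < 1) :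
    Summable (fun n : ℕ =>
      ((ascPochhammer ℝ n).eval (1/2 : ℝ) * (ascPochhammer ℝ n).eval (β/2)) /
        ((ascPochhammer ℝ n).eval ((β+1)/2) * (n.factorial : ℝ)) * ρ ^ (2*n)) := by
  have hg : Summable (fun n : ℕ => (ρ^2)^n) :=
    summable_geometric_of_lt_one (by positivity) (by nlinarith)
  refine Summable.of_nonneg_of_le (fun n => ?_) (fun n => ?_) hg
  · have h1 := poch_pos (show (0:ℝ) < 1/2 by norm_num) n
    have h2 := poch_pos (show (0:ℝ) < β/2 by linarith) n
    have h3 := poch_pos (show (0:ℝ) < (β+1)/2 by linarith) n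
    have h4 : (0:ℝ) < (n.factorial : ℝ) := by positivity
    positivity
  · have h1 := poch_pos (show (0:ℝ) < 1/2 by norm_num) n
    have h2 := poch_pos (show (0:ℝ) < β/2 by linarith) n
    have h3 := poch_pos (show (0:ℝ) < (β+1)/2 by linarith) n
    have h4 : (0:ℝ) < (n.factorial : ℝ) := by positivity
    have hA : (ascPochhammer ℝ n).eval (1/2 : ℝ) ≤ (n.factorial : ℝ) := by
      rw [← poch_one n]; exact poch_mono (by norm_num) (by norm_num) n
    have hB : (ascPochhammer ℝ n).eval (β/2) ≤ (ascPochhammer ℝ n).eval ((β+1)/2) :=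
      poch_mono (by linarith) (by linarith) n
    have hcoef : ((ascPochhammer ℝ n).eval (1/2 : ℝ) * (ascPochhammer ℝ n).eval (β/2)) /
        ((ascPochhammer ℝ n).eval ((β+1)/2) * (n.factorial : ℝ)) ≤ 1 := by
      rw [div_le_one (by positivity)]
      calc (ascPochhammer ℝ n).eval (1/2 : ℝ) * (ascPochhammer ℝ n).eval (β/2)
          ≤ (n.factorial : ℝ) * (ascPochhammer ℝ n).eval ((β+1)/2) :=
            mul_le_mul hA hB h2.le (by positivity)
        _ = (ascPochhammer ℝ n).eval ((β+1)/2) * (n.factorial : ℝ) := by ring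
    calc _ ≤ 1 * ρ ^ (2*n) := by
            apply mul_le_mul_of_nonneg_right hcoef (by positivity)
      _ = (ρ^2)^n := by rw [one_mul, pow_mul]

lemma termwise (β₁ β₂ : ℝ) (h2 : 0 < β₂) (h21 : β₂ ≤ β₁) (ρ : ℝ) (hρ0 : 0 ≤ ρ) (n : ℕ) :
    ((ascPochhammer ℝ n).eval (1/2 : ℝ) * (ascPochhammer ℝ n).eval (β₁/2)) /
        ((ascPochhammer ℝ n).eval ((β₁+1)/2) * (n.factorial : ℝ)) * ρ ^ (2*n) ≤
      Real.Gamma ((β₁ + 1) / 2) * Real.Gamma (β₂ / 2) /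
          (Real.Gamma ((β₂ + 1) / 2) * Real.Gamma (β₁ / 2)) *
        (((ascPochhammer ℝ n).eval (1/2 : ℝ) * (ascPochhammer ℝ n).eval (β₂/2)) /
          ((ascPochhammer ℝ n).eval ((β₂+1)/2) * (n.factorial : ℝ)) * ρ ^ (2*n)) := by
  have h1 : (0:ℝ) < β₁ := lt_of_lt_of_le h2 h21
  set A := (ascPochhammer ℝ n).eval (1/2 : ℝ) with hA
  set B₁ := (ascPochhammer ℝ n).eval (β₁/2) with hB1
  set B₂ := (ascPochhammer ℝ n).eval (β₂/2) with hB2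
  set D₁ := (ascPochhammer ℝ n).eval ((β₁+1)/2) with hD1
  set D₂ := (ascPochhammer ℝ n).eval ((β₂+1)/2) with hD2
  set F := (n.factorial : ℝ) with hF
  set G1 := Real.Gamma ((β₁ + 1) / 2) with hG1
  set G2 := Real.Gamma (β₂ / 2) with hG2
  set G3 := Real.Gamma ((β₂ + 1) / 2) with hG3
  set G4 := Real.Gamma (β₁ / 2) with hG4
  have pA := poch_pos (show (0:ℝ) < 1/2 by norm_num) n
  have pB1 := poch_pos (show (0:ℝ) < β₁/2 by linarith) n
  have pB2 := poch_pos (show (0:ℝ) < β₂/2 by linarith) n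
  have pD1 := poch_pos (show (0:ℝ) < (β₁+1)/2 by linarith) n
  have pD2 := poch_pos (show (0:ℝ) < (β₂+1)/2 by linarith) n
  have pF : (0:ℝ) < F := by rw [hF]; positivity
  have pG1 : (0:ℝ) < G1 := by rw [hG1]; exact Real.Gamma_pos_of_pos (by linarith)
  have pG2 : (0:ℝ) < G2 := by rw [hG2]; exact Real.Gamma_pos_of_pos (by linarith)
  have pG3 : (0:ℝ) < G3 := by rw [hG3]; exact Real.Gamma_pos_of_pos (by linarith)
  have pG4 : (0:ℝ) < G4 := by rw [hG4]; exact Real.Gamma_pos_of_pos (by linarith)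
  have hR : (0:ℝ) ≤ ρ ^ (2*n) := by positivity
  -- key Gamma inequality
  have hgr := gamma_ratio (show (0:ℝ) < β₂/2 + n by positivity)
    (show β₂/2 + n ≤ β₁/2 + n by linarith)
  have e1 : β₂/2 + (n:ℝ) + 1/2 = (β₂+1)/2 + n := by ring
  have e2 : β₁/2 + (n:ℝ) + 1/2 = (β₁+1)/2 + n := by ring
  rw [e1, e2] at hgr
  have q1 : G4 * B₁ = Real.Gamma (β₁/2 + n) := gamma_poch (by linarith) n
  have q2 : G3 * D₂ = Real.Gamma ((β₂+1)/2 + n) := gamma_poch (by linarith) n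
  have q3 : G2 * B₂ = Real.Gamma (β₂/2 + n) := gamma_poch (by linarith) n
  have q4 : G1 * D₁ = Real.Gamma ((β₁+1)/2 + n) := gamma_poch (by linarith) n
  have key : G4 * B₁ * (G3 * D₂) ≤ G2 * B₂ * (G1 * D₁) := by
    rw [q1, q2, q3, q4]; exact hgr
  rw [show A * B₁ / (D₁ * F) * ρ ^ (2*n) = (A * B₁ * ρ ^ (2*n)) / (D₁ * F) from by ring,
    show G1 * G2 / (G3 * G4) * (A * B₂ / (D₂ * F) * ρ ^ (2*n)) =
      (G1 * G2 * (A * B₂ * ρ ^ (2*n))) / (G3 * G4 * (D₂ * F)) from by ring,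
    div_le_div_iff₀ (by positivity) (by positivity)]
  calc A * B₁ * ρ ^ (2*n) * (G3 * G4 * (D₂ * F))
      = (A * F * ρ ^ (2*n)) * (G4 * B₁ * (G3 * D₂)) := by ring
    _ ≤ (A * F * ρ ^ (2*n)) * (G2 * B₂ * (G1 * D₁)) :=
        mul_le_mul_of_nonneg_left key (by positivity)
    _ = G1 * G2 * (A * B₂ * ρ ^ (2*n)) * (D₁ * F) := by ring

/-- `G_β(ρ) = ∑_{n≥0} (1/2)_n (β/2)_n / (((β+1)/2)_n n!) · ρ^(2n)`
(equal to `₂F₁(1/2, β/2; (β+1)/2; ρ²)`). -/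
noncomputable def Gfun (β ρ : ℝ) : ℝ :=
  ∑' n : ℕ,
    (Polynomial.eval (1 / 2 : ℝ) (ascPochhammer ℝ n) *
        Polynomial.eval (β / 2) (ascPochhammer ℝ n)) /
      (Polynomial.eval ((β + 1) / 2) (ascPochhammer ℝ n) * (n.factorial : ℝ)) * ρ ^ (2 * n)

/-- Lemma A.3: for `β₁ ≥ β₂ > 0` and `ρ ∈ [0,1)`,
`G_{β₁}(ρ)/G_{β₂}(ρ) ≤ Γ((β₁+1)/2)Γ(β₂/2) / (Γ((β₂+1)/2)Γ(β₁/2))`. -/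
theorem stmt10 (β₁ β₂ : ℝ) (h2 : 0 < β₂) (h21 : β₂ ≤ β₁)
    (ρ : ℝ) (hρ0 : 0 ≤ ρ) (hρ1 : ρ < 1) :
    Gfun β₁ ρ / Gfun β₂ ρ ≤
      Real.Gamma ((β₁ + 1) / 2) * Real.Gamma (β₂ / 2) /
        (Real.Gamma ((β₂ + 1) / 2) * Real.Gamma (β₁ / 2)) := by
  have h1 : (0:ℝ) < β₁ := lt_of_lt_of_le h2 h21
  have hsum1 := Gsummable β₁ ρ h1 hρ0 hρ1
  have hsum2 := Gsummable β₂ ρ h2 hρ0 hρ1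
  set C := Real.Gamma ((β₁ + 1) / 2) * Real.Gamma (β₂ / 2) /
      (Real.Gamma ((β₂ + 1) / 2) * Real.Gamma (β₁ / 2)) with hC
  have hG2 : 1 ≤ Gfun β₂ ρ := by
    have h0 : ((ascPochhammer ℝ 0).eval (1/2 : ℝ) * (ascPochhammer ℝ 0).eval (β₂/2)) /
        ((ascPochhammer ℝ 0).eval ((β₂+1)/2) * ((0:ℕ).factorial : ℝ)) * ρ ^ (2*0) = 1 := by
      simp [ascPochhammer_zero]
    calc (1:ℝ) = _ := h0.symm
      _ ≤ Gfun β₂ ρ := Summable.le_tsum hsum2 0 (fun i _ => by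
          have h1' := poch_pos (show (0:ℝ) < 1/2 by norm_num) i
          have h2' := poch_pos (show (0:ℝ) < β₂/2 by linarith) i
          have h3' := poch_pos (show (0:ℝ) < (β₂+1)/2 by linarith) i
          have h4' : (0:ℝ) < (i.factorial : ℝ) := by positivity
          positivity)
  have hle : Gfun β₁ ρ ≤ C * Gfun β₂ ρ := by
    rw [Gfun, Gfun, ← tsum_mul_left]
    exact Summable.tsum_le_tsum (fun n => termwise β₁ β₂ h2 h21 ρ hρ0 n) hsum1 (hsum2.mul_left C)
  rw [div_le_iff₀ (by linarith)]
  exact hle
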